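/- Let f = a_0 + a_1 z + ... + a_m z^m ∈ ℤ[z] be primitive. Suppose there exist reals 0 < α < β and an index j ∈ {0,...,m} with |a_j| α^j > Σ_{i≠j} |a_i| β^i. If there exist natural numbers n, d, k, ℓ ≤ m and a prime p ∤ d with β - d ≥ n ≥ α + d, f(n) = ± p^k d, gcd(k, ℓ) = 1, p^k | f^{(i)}(n)/i! for i = 0,...,ℓ-1, and (when k > 1) p ∤ f^{(ℓ)}(n)/ℓ!, then f is irreducible in ℤ[z]. -/

import Mathlib

open Polynomial

private lemma exists_min_attain (S : Finset ℕ) (hS : S.Nonempty) (μ : ℕ → ℕ) :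
    ∃ x₀ ∈ S, (∀ x ∈ S, μ x₀ ≤ μ x) ∧ ∀ x ∈ S, x < x₀ → μ x₀ < μ x := by
  classical
  obtain ⟨i, hi, hieq⟩ := Finset.exists_mem_eq_inf' hS μ
  set T := S.filter fun x => μ x = S.inf' hS μ with hT
  have hTne : T.Nonempty := ⟨i, Finset.mem_filter.2 ⟨hi, hieq.symm⟩⟩
  have hmem := T.min'_mem hTne
  have hmem' := Finset.mem_filter.1 hmem
  refine ⟨T.min' hTne, hmem'.1, fun x hx => ?_, fun x hx hlt => ?_⟩
  · rw [hmem'.2]; exact Finset.inf'_le μ hx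
  · have hle : μ (T.min' hTne) ≤ μ x := by rw [hmem'.2]; exact Finset.inf'_le μ hx
    rcases lt_or_eq_of_le hle with h | h
    · exact h
    · exfalso
      have : x ∈ T := Finset.mem_filter.2 ⟨hx, by rw [← h, hmem'.2]⟩
      exact absurd (T.min'_le x this) (by omega)

private lemma dumas_core (p k ℓ : ℕ) (hp : p.Prime) (hk : 0 < k) (hℓ : 0 < ℓ)
    (hcop : Nat.Coprime k ℓ) (G H : ℤ[X])
    (hG0 : G.coeff 0 ≠ 0) (hH0 : H.coeff 0 ≠ 0)
    (hlow : ∀ i < ℓ, (p : ℤ) ^ k ∣ (G * H).coeff i)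
    (h0 : ¬ (p : ℤ) ^ (k + 1) ∣ (G * H).coeff 0)
    (htop : k = 1 ∨ ¬ (p : ℤ) ∣ (G * H).coeff ℓ) :
    ¬ (p : ℤ) ∣ G.coeff 0 ∨ ¬ (p : ℤ) ∣ H.coeff 0 := by
  classical
  haveI : Fact p.Prime := ⟨hp⟩
  set v : ℤ → ℕ := padicValInt p with hv
  have hvdvd : ∀ (t : ℕ) (x : ℤ), x ≠ 0 → ((p : ℤ) ^ t ∣ x ↔ t ≤ v x) := by
    intro t x hx
    rw [hv, padicValInt_dvd_iff]
    exact ⟨fun h => h.resolve_left hx, fun h => Or.inr h⟩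
  have hvmul : ∀ x y : ℤ, x ≠ 0 → y ≠ 0 → v (x * y) = v x + v y := fun x y hx hy =>
    padicValInt.mul hx hy
  have hF0 : (G * H).coeff 0 = G.coeff 0 * H.coeff 0 := mul_coeff_zero G H
  have hF0ne : (G * H).coeff 0 ≠ 0 := by rw [hF0]; exact mul_ne_zero hG0 hH0
  have hvF0 : v ((G * H).coeff 0) = k := by
    have h1 : k ≤ v ((G * H).coeff 0) := (hvdvd k _ hF0ne).1 (hlow 0 hℓ)
    have h2 : ¬ (k + 1 ≤ v ((G * H).coeff 0)) := fun h => h0 ((hvdvd (k+1) _ hF0ne).2 h)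
    omega
  have hvsum : v (G.coeff 0) + v (H.coeff 0) = k := by
    rw [← hvmul _ _ hG0 hH0, ← hF0, hvF0]
  -- dispose of the case where one valuation is already zero
  by_cases hz : v (G.coeff 0) = 0 ∨ v (H.coeff 0) = 0
  · rcases hz with h | h
    · left; intro hdvd
      have := (hvdvd 1 _ hG0).1 (by simpa using hdvd); omega
    · right; intro hdvd
      have := (hvdvd 1 _ hH0).1 (by simpa using hdvd); omega
  exfalso
  push_neg at hz
  -- so k ≥ 2, and we have the top condition
  have hk2 : 1 < k := by omega
  have htop' : ¬ (p : ℤ) ∣ (G * H).coeff ℓ := htop.resolve_left (by omega)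
  -- minimal attaining indices
  have hGne : G ≠ 0 := fun h => hG0 (by simp [h])
  have hHne : H ≠ 0 := fun h => hH0 (by simp [h])
  set μG : ℕ → ℕ := fun i => ℓ * v (G.coeff i) + i * k with hμG
  set μH : ℕ → ℕ := fun i => ℓ * v (H.coeff i) + i * k with hμH
  obtain ⟨x₀, hx₀S, hx₀le, hx₀lt⟩ :=
    exists_min_attain G.support (Polynomial.support_nonempty.2 hGne) μG
  obtain ⟨y₀, hy₀S, hy₀le, hy₀lt⟩ :=
    exists_min_attain H.support (Polynomial.support_nonempty.2 hHne) μH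
  set s : ℕ := v (G.coeff x₀) + v (H.coeff y₀) with hs
  set t : ℕ := x₀ + y₀ with ht
  have hGx₀ : G.coeff x₀ ≠ 0 := Polynomial.mem_support_iff.1 hx₀S
  have hHy₀ : H.coeff y₀ ≠ 0 := Polynomial.mem_support_iff.1 hy₀S
  -- off-diagonal terms are divisible by p^(s+1)
  have hoff : ∀ q ∈ Finset.HasAntidiagonal.antidiagonal t, q ≠ (x₀, y₀) →
      (p : ℤ) ^ (s + 1) ∣ G.coeff q.1 * H.coeff q.2 := by
    rintro ⟨x, y⟩ hqmem hqne
    have hxy : x + y = t := Finset.HasAntidiagonal.mem_antidiagonal.1 hqmem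
    by_cases hgx : G.coeff x = 0
    · rw [hgx, zero_mul]; exact dvd_zero _
    by_cases hhy : H.coeff y = 0
    · rw [hhy, mul_zero]; exact dvd_zero _
    have hxS : x ∈ G.support := Polynomial.mem_support_iff.2 hgx
    have hyS : y ∈ H.support := Polynomial.mem_support_iff.2 hhy
    have hvs : s + 1 ≤ v (G.coeff x) + v (H.coeff y) := by
      have hcase : x < x₀ ∨ y < y₀ := by
        by_contra hcon
        push_neg at hcon
        exact hqne (by rw [Prod.mk.injEq]; omega)
      have hk1 : x * k + y * k = x₀ * k + y₀ * k := by
        rw [← add_mul, ← add_mul, hxy, ht]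
      have hbig : ℓ * (v (G.coeff x) + v (H.coeff y)) > ℓ * s := by
        rcases hcase with hc | hc
        · have e1 : μG x₀ < μG x := hx₀lt x hxS hc
          have e2 : μH y₀ ≤ μH y := hy₀le y hyS
          simp only [hμG, hμH] at e1 e2
          rw [mul_add, mul_add]
          linarith
        · have e1 : μG x₀ ≤ μG x := hx₀le x hxS
          have e2 : μH y₀ < μH y := hy₀lt y hyS hc
          simp only [hμG, hμH] at e1 e2
          rw [mul_add, mul_add]
          linarith
      exact Nat.lt_of_mul_lt_mul_left hbig
    have : (p : ℤ) ^ (s + 1) ∣ G.coeff x * H.coeff y := by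
      rw [hvdvd _ _ (mul_ne_zero hgx hhy), hvmul _ _ hgx hhy]
      exact hvs
    exact this
  -- the main term is not divisible by p^(s+1)
  have hmainne : G.coeff x₀ * H.coeff y₀ ≠ 0 := mul_ne_zero hGx₀ hHy₀
  have hmain : ¬ (p : ℤ) ^ (s + 1) ∣ G.coeff x₀ * H.coeff y₀ := by
    rw [hvdvd _ _ hmainne, hvmul _ _ hGx₀ hHy₀]
    omega
  -- so v of coeff t of the product is exactly s
  have hmemt : (x₀, y₀) ∈ Finset.HasAntidiagonal.antidiagonal t := Finset.HasAntidiagonal.mem_antidiagonal.2 rfl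
  have hsplit : (G * H).coeff t
      = G.coeff x₀ * H.coeff y₀
        + ∑ q ∈ (Finset.HasAntidiagonal.antidiagonal t).erase (x₀, y₀), G.coeff q.1 * H.coeff q.2 := by
    rw [coeff_mul]
    exact (Finset.add_sum_erase _ (fun q => G.coeff q.1 * H.coeff q.2) hmemt).symm
  have hrest : (p : ℤ) ^ (s + 1) ∣
      ∑ q ∈ (Finset.HasAntidiagonal.antidiagonal t).erase (x₀, y₀), G.coeff q.1 * H.coeff q.2 :=
    Finset.dvd_sum fun q hq =>
      hoff q (Finset.mem_of_mem_erase hq) (Finset.ne_of_mem_erase hq)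
  have hctne : ¬ (p : ℤ) ^ (s + 1) ∣ (G * H).coeff t := by
    rw [hsplit]
    intro hdvd
    exact hmain (by simpa using dvd_sub hdvd hrest)
  have hct0 : (G * H).coeff t ≠ 0 := fun h => hctne (by rw [h]; exact dvd_zero _)
  have hvmain : v (G.coeff x₀ * H.coeff y₀) = s := hvmul _ _ hGx₀ hHy₀
  have hcts : (p : ℤ) ^ s ∣ (G * H).coeff t := by
    rw [hsplit]
    exact dvd_add ((hvdvd s _ hmainne).2 hvmain.ge)
      (dvd_trans (pow_dvd_pow _ (Nat.le_succ s)) hrest)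
  have hvct : v ((G * H).coeff t) = s := by
    have h1 := (hvdvd s _ hct0).1 hcts
    have h2 : ¬ (s + 1 ≤ v ((G * H).coeff t)) := fun h => hctne ((hvdvd _ _ hct0).2 h)
    omega
  -- global lower bound at t
  have hglobal : ℓ * k ≤ ℓ * s + t * k := by
    rcases lt_or_ge t ℓ with hcase | hcase
    · have : k ≤ v ((G * H).coeff t) := (hvdvd k _ hct0).1 (hlow t hcase)
      have : ℓ * k ≤ ℓ * v ((G * H).coeff t) := Nat.mul_le_mul_left ℓ this
      rw [hvct] at this
      omega
    · have : ℓ * k ≤ t * k := Nat.mul_le_mul_right k hcase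
      omega
  -- trailing degrees mod p
  set φ : ℤ →+* ZMod p := Int.castRingHom (ZMod p) with hφ
  have hcoeffmap : ∀ (Q : ℤ[X]) (i : ℕ), (Q.map φ).coeff i = ((Q.coeff i : ℤ) : ZMod p) := by
    intro Q i; rw [Polynomial.coeff_map]; rfl
  have hFl : ((G.map φ) * (H.map φ)).coeff ℓ ≠ 0 := by
    rw [← Polynomial.map_mul, hcoeffmap]
    simpa [ZMod.intCast_zmod_eq_zero_iff_dvd] using htop'
  have hGmne : G.map φ ≠ 0 := by
    intro h; rw [h, zero_mul] at hFl; simp at hFl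
  have hHmne : H.map φ ≠ 0 := by
    intro h; rw [h, mul_zero] at hFl; simp at hFl
  set a : ℕ := (G.map φ).natTrailingDegree with ha
  set b : ℕ := (H.map φ).natTrailingDegree with hb
  have haG : (G.map φ).coeff a ≠ 0 := Polynomial.coeff_natTrailingDegree_ne_zero.2 hGmne
  have hbH : (H.map φ).coeff b ≠ 0 := Polynomial.coeff_natTrailingDegree_ne_zero.2 hHmne
  have haGZ : G.coeff a ≠ 0 := by
    intro h; rw [hcoeffmap, h] at haG; simp at haG
  have hbHZ : H.coeff b ≠ 0 := by
    intro h; rw [hcoeffmap, h] at hbH; simp at hbH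
  have hvGa : v (G.coeff a) = 0 := by
    apply padicValInt.eq_zero_of_not_dvd
    intro hdvd
    rw [hcoeffmap] at haG
    exact haG ((ZMod.intCast_zmod_eq_zero_iff_dvd _ _).2 hdvd)
  have hvHb : v (H.coeff b) = 0 := by
    apply padicValInt.eq_zero_of_not_dvd
    intro hdvd
    rw [hcoeffmap] at hbH
    exact hbH ((ZMod.intCast_zmod_eq_zero_iff_dvd _ _).2 hdvd)
  -- a + b = ℓ
  have hab : a + b = ℓ := by
    have h1 : ((G.map φ) * (H.map φ)).natTrailingDegree = a + b :=
      Polynomial.natTrailingDegree_mul hGmne hHmne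
    have h2 : ((G.map φ) * (H.map φ)).natTrailingDegree = ℓ := by
      have hle : ((G.map φ) * (H.map φ)).natTrailingDegree ≤ ℓ :=
        Polynomial.natTrailingDegree_le_of_ne_zero hFl
      have hge : ℓ ≤ ((G.map φ) * (H.map φ)).natTrailingDegree := by
        apply Polynomial.le_natTrailingDegree
        · intro h; rw [h] at hFl; simp at hFl
        · intro i hi
          rw [← Polynomial.map_mul, hcoeffmap]
          rw [ZMod.intCast_zmod_eq_zero_iff_dvd]
          exact dvd_trans (dvd_pow_self (p : ℤ) (by omega : k ≠ 0)) (hlow i (by omega))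
      omega
    omega
  -- final pinching
  have hVGle0 : μG x₀ ≤ ℓ * v (G.coeff 0) := by
    have h0S : (0 : ℕ) ∈ G.support := Polynomial.mem_support_iff.2 hG0
    have := hx₀le 0 h0S
    simpa [hμG] using this
  have hVHle0 : μH y₀ ≤ ℓ * v (H.coeff 0) := by
    have h0S : (0 : ℕ) ∈ H.support := Polynomial.mem_support_iff.2 hH0
    have := hy₀le 0 h0S
    simpa [hμH] using this
  have haS : a ∈ G.support := Polynomial.mem_support_iff.2 haGZ
  have hbS : b ∈ H.support := Polynomial.mem_support_iff.2 hbHZ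
  have hVGlea : μG x₀ ≤ a * k := by
    have := hx₀le a haS
    simpa [hμG, hvGa] using this
  have hVHleb : μH y₀ ≤ b * k := by
    have := hy₀le b hbS
    simpa [hμH, hvHb] using this
  have hsum1 : ℓ * v (G.coeff 0) + ℓ * v (H.coeff 0) = ℓ * k := by
    rw [← mul_add, hvsum]
  have hsum2 : a * k + b * k = ℓ * k := by rw [← add_mul, hab]
  have hVsum : ℓ * k ≤ μG x₀ + μH y₀ := by
    have : μG x₀ + μH y₀ = ℓ * s + t * k := by
      simp only [hμG, hμH, hs, ht]
      ring
    omega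
  -- deduce ℓ * v (G.coeff 0) = a * k
  have hkey : ℓ * v (G.coeff 0) = a * k := by linarith
  have hdvd_a : ℓ ∣ a * k := ⟨v (G.coeff 0), hkey.symm⟩
  have hdvd_a' : ℓ ∣ a := (Nat.Coprime.dvd_of_dvd_mul_right hcop.symm) hdvd_a
  have haℓ : a ≤ ℓ := by omega
  rcases Nat.eq_zero_or_pos a with ha0 | hapos
  · -- a = 0 : v (G.coeff 0) = 0, contradiction with hz
    rw [ha0, zero_mul] at hkey
    have : v (G.coeff 0) = 0 := by
      rcases Nat.mul_eq_zero.mp hkey with h | h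
      · omega
      · exact h
    exact hz.1 this
  · have haeq : a = ℓ := Nat.le_antisymm haℓ (Nat.le_of_dvd hapos hdvd_a')
    have hb0 : b = 0 := by omega
    have hkey2 : ℓ * v (H.coeff 0) = b * k := by linarith
    rw [hb0, zero_mul] at hkey2
    have : v (H.coeff 0) = 0 := by
      rcases Nat.mul_eq_zero.mp hkey2 with h | h
      · omega
      · exact h
    exact hz.2 this


private lemma roots_out (m : ℕ) (f : ℤ[X]) (hdeg : f.natDegree = m)
    (α β : ℝ) (hα : 0 < α) (hαβ : α < β) (j : ℕ) (hj : j ≤ m)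
    (hineq : (|f.coeff j| : ℝ) * α ^ j >
      ∑ i ∈ (Finset.range (m + 1)).erase j, (|f.coeff i| : ℝ) * β ^ i)
    (z : ℂ) (hz : (f.map (Int.castRingHom ℂ)).eval z = 0) :
    ‖z‖ < α ∨ β < ‖z‖ := by
  by_contra hcon
  push_neg at hcon
  obtain ⟨h1, h2⟩ := hcon
  have hβ0 : (0:ℝ) < β := lt_trans hα hαβ
  have hzsum : ∑ i ∈ Finset.range (m + 1), (f.coeff i : ℂ) * z ^ i = 0 := by
    have := hz
    rw [Polynomial.eval_map, Polynomial.eval₂_eq_sum_range] at this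
    rw [hdeg] at this
    simpa using this
  have hjmem : j ∈ Finset.range (m + 1) := Finset.mem_range.2 (by omega)
  have hsplit : (f.coeff j : ℂ) * z ^ j
      = - ∑ i ∈ (Finset.range (m + 1)).erase j, (f.coeff i : ℂ) * z ^ i := by
    have := Finset.add_sum_erase _ (fun i => (f.coeff i : ℂ) * z ^ i) hjmem
    rw [hzsum] at this
    exact eq_neg_of_add_eq_zero_left this
  have habs : (|f.coeff j| : ℝ) * ‖z‖ ^ j
      ≤ ∑ i ∈ (Finset.range (m + 1)).erase j, (|f.coeff i| : ℝ) * β ^ i := by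
    have e1 : ‖(f.coeff j : ℂ) * z ^ j‖
        = (|f.coeff j| : ℝ) * ‖z‖ ^ j := by
      rw [norm_mul, norm_pow, Complex.norm_intCast]
    rw [← e1, hsplit]
    rw [norm_neg]
    calc ‖∑ i ∈ (Finset.range (m + 1)).erase j, (f.coeff i : ℂ) * z ^ i‖
        ≤ ∑ i ∈ (Finset.range (m + 1)).erase j, ‖(f.coeff i : ℂ) * z ^ i‖ :=
          norm_sum_le _ _
      _ ≤ ∑ i ∈ (Finset.range (m + 1)).erase j, (|f.coeff i| : ℝ) * β ^ i := by
          apply Finset.sum_le_sum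
          intro i hi
          rw [norm_mul, norm_pow, Complex.norm_intCast]
          push_cast
          apply mul_le_mul_of_nonneg_left _ (abs_nonneg _)
          exact pow_le_pow_left₀ (norm_nonneg z) h2 i
  have hlast : (|f.coeff j| : ℝ) * α ^ j ≤ (|f.coeff j| : ℝ) * ‖z‖ ^ j := by
    apply mul_le_mul_of_nonneg_left _ (by positivity)
    exact pow_le_pow_left₀ (le_of_lt hα) h1 j
  linarith

private lemma factor_lb (q : ℤ[X]) (hqd : 1 ≤ q.natDegree) (N : ℂ) (d : ℕ) (hd : 0 < d)
    (hroots : ∀ z ∈ (q.map (Int.castRingHom ℂ)).roots, (d : ℝ) < ‖N - z‖) :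
    (d : ℝ) < ‖(q.map (Int.castRingHom ℂ)).eval N‖ := by
  set B := q.map (Int.castRingHom ℂ) with hB
  have hq0 : q ≠ 0 := fun h => by simp [h] at hqd
  have hB0 : B ≠ 0 := by
    rw [hB, Ne, Polynomial.map_eq_zero_iff (RingHom.injective_int _)]
    exact hq0
  have hsp : B.Splits := IsAlgClosed.splits B
  have hcard : Multiset.card B.roots = B.natDegree := Polynomial.splits_iff_card_roots.1 hsp
  have hdeg : B.natDegree = q.natDegree :=
    Polynomial.natDegree_map_eq_of_injective (RingHom.injective_int _) q
  have hcard1 : 1 ≤ Multiset.card B.roots := by omega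
  obtain ⟨z₀, hz₀⟩ := Multiset.card_pos_iff_exists_mem.1 (lt_of_lt_of_le Nat.zero_lt_one hcard1)
  obtain ⟨rest, hrest⟩ := Multiset.exists_cons_of_mem hz₀
  have heq := hsp.eq_prod_roots
  have heval : ‖B.eval N‖
      = ‖B.leadingCoeff‖ * (Multiset.map (fun z => ‖N - z‖) B.roots).prod := by
    conv_lhs => rw [heq]
    rw [Polynomial.eval_mul, Polynomial.eval_C, norm_mul, Polynomial.eval_multiset_prod]
    congr 1
    rw [Multiset.map_map]; change (normHom : ℂ →*₀ ℝ) _ = _; rw [map_multiset_prod, Multiset.map_map]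
    congr 1
    apply Multiset.map_congr rfl
    intro z _
    simp
  have hlead : (1 : ℝ) ≤ ‖B.leadingCoeff‖ := by
    have : B.leadingCoeff = ((q.leadingCoeff : ℤ) : ℂ) := by
      rw [hB, Polynomial.leadingCoeff, Polynomial.coeff_map, hdeg]
      rfl
    rw [this, Complex.norm_intCast]
    have : q.leadingCoeff ≠ 0 := Polynomial.leadingCoeff_ne_zero.2 hq0
    have h1 : 1 ≤ |q.leadingCoeff| := Int.one_le_abs (by omega)
    calc (1:ℝ) ≤ (|q.leadingCoeff| : ℝ) := by exact_mod_cast h1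
      _ = |((q.leadingCoeff : ℤ) : ℝ)| := by push_cast; ring
  have hprodrest : (1 : ℝ) ≤ (Multiset.map (fun z => ‖N - z‖) rest).prod := by
    apply Multiset.one_le_prod
    intro x hx
    obtain ⟨z, hzmem, hzeq⟩ := Multiset.mem_map.1 hx
    have : z ∈ B.roots := by rw [hrest]; exact Multiset.mem_cons_of_mem hzmem
    have := hroots z this
    have hd1 : (1:ℝ) ≤ d := by exact_mod_cast hd
    rw [← hzeq]
    linarith
  have hz₀dist := hroots z₀ hz₀
  rw [heval, hrest]
  rw [Multiset.map_cons, Multiset.prod_cons]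
  have habs0 : (0:ℝ) ≤ ‖N - z₀‖ := norm_nonneg _
  have hR0 : (0:ℝ) ≤ (Multiset.map (fun z => ‖N - z‖) rest).prod :=
    le_trans zero_le_one hprodrest
  calc (d : ℝ) < ‖N - z₀‖ := hz₀dist
    _ ≤ ‖N - z₀‖ * (Multiset.map (fun z => ‖N - z‖) rest).prod :=
        le_mul_of_one_le_right habs0 hprodrest
    _ ≤ ‖B.leadingCoeff‖ *
        (‖N - z₀‖ * (Multiset.map (fun z => ‖N - z‖) rest).prod) :=
        le_mul_of_one_le_left (mul_nonneg habs0 hR0) hlead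

private lemma final_contra (p k d : ℕ) (hp : p.Prime) (hd : 0 < d) (u w : ℤ)
    (huv : u * w = (p : ℤ) ^ k * d ∨ u * w = -((p : ℤ) ^ k * d))
    (hpu : ¬ (p : ℤ) ∣ u) (hub : (d : ℝ) < |(u : ℝ)|) : False := by
  have hprime : Prime (p : ℤ) := Nat.prime_iff_prime_int.mp hp
  have hpkne : ((p : ℤ) ^ k) ≠ 0 := pow_ne_zero _ (by exact_mod_cast hp.ne_zero)
  have hcop' : IsCoprime ((p : ℤ) ^ k) u :=
    IsCoprime.pow_left (hprime.coprime_iff_not_dvd.mpr hpu)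
  have hdvduw : (p : ℤ) ^ k ∣ u * w := by
    rcases huv with h | h
    · rw [h]; exact Dvd.intro _ rfl
    · rw [h]; exact dvd_neg.2 (Dvd.intro _ rfl)
  have hw : (p : ℤ) ^ k ∣ w := hcop'.dvd_of_dvd_mul_left hdvduw
  obtain ⟨e, he⟩ := hw
  have hud : u ∣ (d : ℤ) := by
    rcases huv with h | h
    · rw [he] at h
      have h2 : (p : ℤ) ^ k * (u * e) = (p : ℤ) ^ k * d := by linarith [h]
      have h3 : u * e = (d : ℤ) := mul_left_cancel₀ hpkne h2
      exact Dvd.intro _ h3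
    · rw [he] at h
      have h2 : (p : ℤ) ^ k * (u * e) = (p : ℤ) ^ k * (-d) := by linarith [h]
      have h3 : u * e = -(d : ℤ) := mul_left_cancel₀ hpkne h2
      exact (dvd_neg.1 ⟨e, h3.symm⟩)
  have habs : |u| ≤ (d : ℤ) := Int.le_of_dvd (by exact_mod_cast hd) ((abs_dvd _ _).2 hud)
  have : ((|u| : ℤ) : ℝ) ≤ (d : ℝ) := by exact_mod_cast habs
  rw [Int.cast_abs] at this
  linarith

open Polynomial in
theorem stmt_9 (m : ℕ) (f : ℤ[X]) (hdeg : f.natDegree = m) (hprim : f.IsPrimitive)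
    (α β : ℝ) (hα : 0 < α) (hαβ : α < β) (j : ℕ) (hj : j ≤ m)
    (hineq : (|f.coeff j| : ℝ) * α ^ j >
      ∑ i ∈ (Finset.range (m + 1)).erase j, (|f.coeff i| : ℝ) * β ^ i)
    (n d k ℓ : ℕ) (hn : 0 < n) (hd : 0 < d) (hk : 0 < k) (hℓ : 0 < ℓ)
    (hℓm : ℓ ≤ m) (p : ℕ) (hp : p.Prime) (hpd : ¬ p ∣ d)
    (hnα : (n : ℝ) ≥ α + d) (hnβ : (n : ℝ) ≤ β - d)
    (hval : f.eval (n : ℤ) = (p : ℤ) ^ k * d ∨ f.eval (n : ℤ) = -((p : ℤ) ^ k * d))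
    (hcop : Nat.Coprime k ℓ)
    (hdiv : ∀ i < ℓ, (p : ℤ) ^ k ∣ (Polynomial.hasseDeriv i f).eval (n : ℤ))
    (hnd : 1 < k → ¬ (p : ℤ) ∣ (Polynomial.hasseDeriv ℓ f).eval (n : ℤ)) :
    Irreducible f := by
  have hm1 : 1 ≤ m := le_trans hℓ hℓm
  have hpkd : ((p : ℤ) ^ k * d) ≠ 0 := by
    apply mul_ne_zero (pow_ne_zero _ (by exact_mod_cast hp.ne_zero))
    exact_mod_cast hd.ne'
  have hfn : f.eval (n : ℤ) ≠ 0 := by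
    rcases hval with h | h <;> rw [h] <;> simpa using hpkd
  have hfne : f ≠ 0 := fun h => hfn (by rw [h]; simp)
  constructor
  · intro hu
    have := Polynomial.natDegree_eq_zero_of_isUnit hu
    omega
  intro g h hf
  by_contra hcon
  push_neg at hcon
  obtain ⟨hgu, hhu⟩ := hcon
  -- both factors are nonconstant
  have hnonconst : ∀ q r : ℤ[X], f = q * r → ¬ IsUnit q → 1 ≤ q.natDegree := by
    intro q r hqr hqu
    by_contra hc
    push_neg at hc
    interval_cases hq : q.natDegree
    · have hqC : q = C (q.coeff 0) := Polynomial.eq_C_of_natDegree_eq_zero hq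
      have : C (q.coeff 0) ∣ f := ⟨r, by rw [← hqC]; exact hqr⟩
      have := hprim _ this
      exact hqu (hqC ▸ Polynomial.isUnit_C.2 this)
  have hgdeg : 1 ≤ g.natDegree := hnonconst g h hf hgu
  have hhdeg : 1 ≤ h.natDegree := hnonconst h g (by rw [hf]; ring) hhu
  -- evaluation factorization
  have hgh : g.eval (n : ℤ) * h.eval (n : ℤ) = f.eval (n : ℤ) := by
    rw [hf, Polynomial.eval_mul]
  have hgn : g.eval (n : ℤ) ≠ 0 := fun hz => hfn (by rw [← hgh, hz, zero_mul])
  have hhn : h.eval (n : ℤ) ≠ 0 := fun hz => hfn (by rw [← hgh, hz, mul_zero])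
  -- the Dumas step
  set G := Polynomial.taylor (n : ℤ) g with hG
  set H := Polynomial.taylor (n : ℤ) h with hH
  have hGH : G * H = Polynomial.taylor (n : ℤ) f := by
    rw [hG, hH, ← Polynomial.taylor_mul, hf]
  have hcoeff : ∀ i, (G * H).coeff i = (Polynomial.hasseDeriv i f).eval (n : ℤ) := by
    intro i; rw [hGH, Polynomial.taylor_coeff]
  have hcoeff0 : (G * H).coeff 0 = f.eval (n : ℤ) := by
    rw [hGH, Polynomial.taylor_coeff_zero]
  have hkey : ¬ (p : ℤ) ∣ G.coeff 0 ∨ ¬ (p : ℤ) ∣ H.coeff 0 := by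
    apply dumas_core p k ℓ hp hk hℓ hcop
    · rw [hG, Polynomial.taylor_coeff_zero]; exact hgn
    · rw [hH, Polynomial.taylor_coeff_zero]; exact hhn
    · intro i hi; rw [hcoeff]; exact hdiv i hi
    · rw [hcoeff0]
      intro hdvd
      have hpd' : (p : ℤ) ∣ (d : ℤ) := by
        have h2 : (p : ℤ) ^ k * (p : ℤ) ∣ (p : ℤ) ^ k * (d : ℤ) := by
          rw [← pow_succ]
          rcases hval with hv | hv
          · rwa [hv] at hdvd
          · rw [hv, dvd_neg] at hdvd; exact hdvd
        exact (mul_dvd_mul_iff_left (pow_ne_zero k (by exact_mod_cast hp.ne_zero))).1 h2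
      exact hpd (by exact_mod_cast hpd')
    · rcases Nat.lt_or_ge 1 k with hk2 | hk1
      · right; rw [hcoeff]; exact hnd hk2
      · left; omega
  rw [hG, hH, Polynomial.taylor_coeff_zero, Polynomial.taylor_coeff_zero] at hkey
  -- analytic lower bounds for both factors
  have hflb : ∀ q r : ℤ[X], f = q * r → 1 ≤ q.natDegree → (d : ℝ) < |((q.eval (n : ℤ) : ℤ) : ℝ)| := by
    intro q r hqr hqdeg
    have hroots : ∀ z ∈ (q.map (Int.castRingHom ℂ)).roots, (d : ℝ) < ‖((n : ℕ) : ℂ) - z‖ := by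
      intro z hz
      have hq0 : q ≠ 0 := fun hq => hfne (by rw [hqr, hq, zero_mul])
      have hzr : (q.map (Int.castRingHom ℂ)).eval z = 0 :=
        (Polynomial.mem_roots'.1 hz).2
      have hfz : (f.map (Int.castRingHom ℂ)).eval z = 0 := by
        rw [hqr, Polynomial.map_mul, Polynomial.eval_mul, hzr, zero_mul]
      have hout := roots_out m f hdeg α β hα hαβ j hj hineq z hfz
      have habsn : ‖((n : ℕ) : ℂ)‖ = (n : ℝ) := by
        rw [Complex.norm_natCast]
      have htri1 : ‖(n : ℂ)‖ - ‖z‖ ≤ ‖((n : ℕ) : ℂ) - z‖ := by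
        have := norm_sub_norm_le ((n : ℕ) : ℂ) z
        exact this
      have htri2 : ‖z‖ - ‖((n : ℕ) : ℂ)‖ ≤ ‖((n : ℕ) : ℂ) - z‖ := by
        have := norm_sub_norm_le z ((n : ℕ) : ℂ)
        rwa [norm_sub_rev] at this
      rcases hout with hsmall | hbig
      · rw [habsn] at htri1; linarith
      · rw [habsn] at htri2; linarith
    have := factor_lb q hqdeg ((n : ℕ) : ℂ) d hd hroots
    have heval : (q.map (Int.castRingHom ℂ)).eval ((n : ℕ) : ℂ) = ((q.eval (n : ℤ) : ℤ) : ℂ) := by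
      have hcast : ((n : ℕ) : ℂ) = (Int.castRingHom ℂ) ((n : ℤ)) := by simp
      rw [hcast, Polynomial.eval_map, Polynomial.eval₂_hom]
      simp
    rw [heval] at this
    rwa [Complex.norm_intCast] at this
  -- finish
  rcases hkey with hcase | hcase
  · exact final_contra p k d hp hd (g.eval (n : ℤ)) (h.eval (n : ℤ))
      (by rw [hgh]; exact hval) hcase (hflb g h hf hgdeg)
  · exact final_contra p k d hp hd (h.eval (n : ℤ)) (g.eval (n : ℤ))
      (by rw [mul_comm, hgh]; exact hval) hcase (hflb h g (by rw [hf]; ring) hhdeg)
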